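/- Let m ≥ 2 be an integer, let v : ℝ^m ∖ {0} → ℝ^{m³} be the cubic Misawa–Nakauchi map, and for β ∈ (0, π/2) define ṽ_β : ℝ^m ∖ {0} → ℝ^{m³+1} by ṽ_β(x) = (sin β · v(x), cos β), a map into the unit sphere 𝕊^{m³} ⊂ ℝ^{m³+1}. Then ṽ_β satisfies the biharmonic map equation Δ²ṽ_β + 2 div(|∇ṽ_β|² ∇ṽ_β) + (|Δṽ_β|² + Δ|∇ṽ_β|² + 2⟨∇ṽ_β, ∇Δṽ_β⟩ + 2|∇ṽ_β|⁴) ṽ_β = 0 at every point of ℝ^m ∖ {0} if and only if sin²β = (5/6)·(m−1)/(m+1). -/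

import Mathlib

noncomputable section

open Real MeasureTheory

/-- Partial derivative of `f` in the `a`-th coordinate direction. -/
def pd {m : ℕ} (a : Fin m) (f : EuclideanSpace ℝ (Fin m) → ℝ)
    (x : EuclideanSpace ℝ (Fin m)) : ℝ :=
  fderiv ℝ f x (EuclideanSpace.single a 1)

/-- Euclidean Laplacian `Δf = Σ_a ∂²f/∂x_a²`. -/
def lap {m : ℕ} (f : EuclideanSpace ℝ (Fin m) → ℝ)
    (x : EuclideanSpace ℝ (Fin m)) : ℝ :=
  ∑ a : Fin m, pd a (pd a f) x

/-- Squared norm of the total derivative: `|∇w|² = Σ_{k,a} (∂_k w_a)²`. -/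
def gradSq {m : ℕ} {ι : Type*} [Fintype ι]
    (w : ι → EuclideanSpace ℝ (Fin m) → ℝ) (x : EuclideanSpace ℝ (Fin m)) : ℝ :=
  ∑ k : Fin m, ∑ a : ι, (pd k (w a) x) ^ 2

/-- The cubic Misawa–Nakauchi map
`v_{ijk}(x) = (1/√((m−1)(m+2)))(δ_{ij}x_k/r + δ_{jk}x_i/r + δ_{ik}x_j/r − (m+2)xᵢxⱼx_k/r³)`. -/
def vMN (m : ℕ) (i j k : Fin m) (x : EuclideanSpace ℝ (Fin m)) : ℝ :=
  (1 / Real.sqrt (((m : ℝ) - 1) * ((m : ℝ) + 2))) *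
    ((if i = j then (1 : ℝ) else 0) * x k / ‖x‖
      + (if j = k then (1 : ℝ) else 0) * x i / ‖x‖
      + (if i = k then (1 : ℝ) else 0) * x j / ‖x‖
      - ((m : ℝ) + 2) * x i * x j * x k / ‖x‖ ^ 3)

/-- `w` satisfies the (extrinsic) biharmonic map equation for sphere-valued maps at `x`:
`Δ²w + 2 div(|∇w|²∇w) + (|Δw|² + Δ|∇w|² + 2⟨∇w,∇Δw⟩ + 2|∇w|⁴) w = 0`. -/
def IsBiharmonicAt {m : ℕ} {ι : Type*} [Fintype ι]
    (w : ι → EuclideanSpace ℝ (Fin m) → ℝ) (x : EuclideanSpace ℝ (Fin m)) : Prop :=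
  ∀ a : ι,
    lap (lap (w a)) x
      + 2 * ∑ k : Fin m, pd k (fun y => gradSq w y * pd k (w a) y) x
      + ((∑ b : ι, (lap (w b) x) ^ 2) + lap (gradSq w) x
          + 2 * ∑ k : Fin m, ∑ b : ι, pd k (w b) x * pd k (lap (w b)) x
          + 2 * (gradSq w x) ^ 2) * w a x = 0

/-- The rotated map `ṽ_β = (sin β · v, cos β)`, with values in `ℝ^{m³+1} = ℝ^{m³} × ℝ`. -/
def vTilde (m : ℕ) (β : ℝ) :
    (Fin m × Fin m × Fin m) ⊕ Unit → EuclideanSpace ℝ (Fin m) → ℝ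
  | Sum.inl p => fun x => Real.sin β * vMN m p.1 p.2.1 p.2.2 x
  | Sum.inr _ => fun _ => Real.cos β

/-! ### Auxiliary development -/

abbrev EE (m : ℕ) := EuclideanSpace ℝ (Fin m)

/-- Kronecker delta. -/
def dlt {m : ℕ} (i a : Fin m) : ℝ := if i = a then 1 else 0

/-- Normalizing constant of the Misawa–Nakauchi map. -/
def cMN (m : ℕ) : ℝ := 1 / Real.sqrt (((m : ℝ) - 1) * ((m : ℝ) + 2))

/-- Inverse power of the norm. -/
def UU {m : ℕ} (n : ℕ) (y : EE m) : ℝ := (‖y‖ ^ n)⁻¹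

/-- The family of "generalized Misawa–Nakauchi" functions with exponent `n`. -/
def WW (m : ℕ) (n : ℕ) (i j k : Fin m) (y : EE m) : ℝ :=
  cMN m * (dlt i j * (y k * UU n y) + dlt j k * (y i * UU n y) + dlt i k * (y j * UU n y)
    - ((m : ℝ) + 2) * (y i * (y j * (y k * UU (n+2) y))))

/-- Formula for the partial derivatives of `WW m n`. -/
def FF (m : ℕ) (n : ℕ) (i j k a : Fin m) (y : EE m) : ℝ :=
  cMN m * ((dlt i j * dlt k a + dlt j k * dlt i a + dlt i k * dlt j a) * UU n y
    - (n : ℝ) * (dlt i j * (y k * (y a * UU (n+2) y)) + dlt j k * (y i * (y a * UU (n+2) y))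
        + dlt i k * (y j * (y a * UU (n+2) y)))
    - ((m : ℝ) + 2) * (dlt i a * (y j * (y k * UU (n+2) y)) + dlt j a * (y i * (y k * UU (n+2) y))
        + dlt k a * (y i * (y j * UU (n+2) y)))
    + ((n : ℝ) + 2) * ((m : ℝ) + 2) * (y i * (y j * (y k * (y a * UU (n+4) y)))))

section Toolkit

variable {m : ℕ} {x : EE m} {f g : EE m → ℝ}

theorem vMN_eq_WW (m : ℕ) (i j k : Fin m) : vMN m i j k = WW m 1 i j k := by
  funext y
  simp only [vMN, WW, cMN, UU, dlt, pow_one, div_eq_mul_inv]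
  ring

theorem pd_congr (a : Fin m) (hx : x ≠ 0) (h : ∀ y : EE m, y ≠ 0 → f y = g y) :
    pd a f x = pd a g x := by
  have hev : f =ᶠ[nhds x] g := by
    filter_upwards [IsOpen.mem_nhds isOpen_compl_singleton hx] with y hy
    exact h y hy
  unfold pd
  rw [hev.fderiv_eq]

theorem lap_congr (hx : x ≠ 0) (h : ∀ y : EE m, y ≠ 0 → f y = g y) :
    lap f x = lap g x := by
  unfold lap
  refine Finset.sum_congr rfl fun a _ => ?_
  exact pd_congr a hx fun y hy => pd_congr a hy h

theorem pd_const (a : Fin m) (c : ℝ) : pd a (fun _ : EE m => c) x = 0 := by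
  simp [pd]

theorem pd_const_mul (a : Fin m) (c : ℝ) (f : EE m → ℝ) (x : EE m) :
    pd a (fun y => c * f y) x = c * pd a f x := by
  unfold pd
  by_cases hf : DifferentiableAt ℝ f x
  · rw [fderiv_const_mul hf]; simp
  · by_cases hc : c = 0
    · simp [hc]
    · rw [fderiv_zero_of_not_differentiableAt hf,
        fderiv_zero_of_not_differentiableAt (fun h => hf ?_)]
      · simp
      · have := h.const_mul c⁻¹
        simpa [← mul_assoc, inv_mul_cancel₀ hc] using this

theorem pd_add (a : Fin m) (hf : DifferentiableAt ℝ f x) (hg : DifferentiableAt ℝ g x) :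
    pd a (fun y => f y + g y) x = pd a f x + pd a g x := by
  unfold pd; rw [fderiv_fun_add hf hg]; simp

theorem pd_sub (a : Fin m) (hf : DifferentiableAt ℝ f x) (hg : DifferentiableAt ℝ g x) :
    pd a (fun y => f y - g y) x = pd a f x - pd a g x := by
  unfold pd; rw [fderiv_fun_sub hf hg]; simp

theorem pd_mul (a : Fin m) (hf : DifferentiableAt ℝ f x) (hg : DifferentiableAt ℝ g x) :
    pd a (fun y => f y * g y) x = pd a f x * g x + f x * pd a g x := by
  unfold pd; rw [fderiv_fun_mul hf hg]; simp; ring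

theorem pd_sum {ι : Type*} [Fintype ι] {f : ι → EE m → ℝ} (a : Fin m)
    (hf : ∀ i, DifferentiableAt ℝ (f i) x) :
    pd a (fun y => ∑ i, f i y) x = ∑ i, pd a (f i) x := by
  unfold pd; rw [fderiv_fun_sum (fun i _ => hf i)]; simp

theorem diff_coord (i : Fin m) (x : EE m) :
    DifferentiableAt ℝ (fun y : EE m => y i) x :=
  (EuclideanSpace.proj (𝕜 := ℝ) i).differentiableAt

theorem pd_coord (a i : Fin m) (x : EE m) :
    pd a (fun y : EE m => y i) x = dlt i a := by
  unfold pd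
  have : (fun y : EE m => y i) = fun y => EuclideanSpace.proj (𝕜 := ℝ) i y := rfl
  rw [this, (EuclideanSpace.proj (𝕜 := ℝ) i).fderiv]
  simp [EuclideanSpace.proj, EuclideanSpace.single_apply, dlt, eq_comm]

theorem norm_sq_eq_sum (x : EE m) : ‖x‖ ^ 2 = ∑ i, x i ^ 2 := by
  rw [EuclideanSpace.norm_eq, sq_sqrt]
  · simp [sq_abs]
  · positivity

theorem hasFDerivAt_norm' (hx : x ≠ 0) :
    HasFDerivAt (fun y : EE m => ‖y‖)
      ((‖x‖⁻¹) • ∑ i : Fin m, (x i) • (EuclideanSpace.proj (𝕜 := ℝ) i)) x := by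
  have hnorm : ‖x‖ ≠ 0 := norm_ne_zero_iff.mpr hx
  have hd : HasFDerivAt (fun y : EE m => ∑ i, y i ^ 2)
      (∑ i : Fin m, (2 * x i) • (EuclideanSpace.proj (𝕜 := ℝ) i)) x := by
    apply HasFDerivAt.fun_sum
    intro i _
    have h1 : HasFDerivAt (fun y : EE m => y i) (EuclideanSpace.proj (𝕜 := ℝ) i) x :=
      (EuclideanSpace.proj (𝕜 := ℝ) i).hasFDerivAt
    have hp : HasFDerivAt (fun y : EE m => (y i) * (y i))
        ((x i) • (EuclideanSpace.proj (𝕜 := ℝ) i) + (x i) • (EuclideanSpace.proj (𝕜 := ℝ) i)) x := by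
      exact h1.fun_mul h1
    have h2 : (fun y : EE m => y i ^ 2) = fun y : EE m => (y i) * (y i) := by
      funext y; ring
    rw [h2]
    rw [two_mul, add_smul]
    exact hp
  have hsq : (∑ i, x i ^ 2) = ‖x‖ ^ 2 := (norm_sq_eq_sum x).symm
  have h2 : HasDerivAt Real.sqrt (1 / (2 * Real.sqrt (∑ i, x i ^ 2))) (∑ i, x i ^ 2) := by
    apply Real.hasDerivAt_sqrt
    rw [hsq]; positivity
  have h3 := h2.comp_hasFDerivAt x hd
  have heq : (fun y : EE m => Real.sqrt (∑ i, y i ^ 2)) = fun y : EE m => ‖y‖ := by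
    funext y
    rw [norm_sq_eq_sum y |>.symm, Real.sqrt_sq (norm_nonneg y)]
  have h3' : HasFDerivAt (fun y : EE m => ‖y‖)
      ((1 / (2 * Real.sqrt (∑ i, x i ^ 2))) • ∑ i : Fin m, (2 * x i) • (EuclideanSpace.proj (𝕜 := ℝ) i)) x := by
    rw [← heq]; exact h3
  convert h3' using 1
  rw [hsq, Real.sqrt_sq (norm_nonneg x)]
  rw [Finset.smul_sum, Finset.smul_sum]
  congr 1; funext i
  rw [smul_smul, smul_smul]
  congr 1
  field_simp

theorem hasFDerivAt_UU (hx : x ≠ 0) (n : ℕ) :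
    HasFDerivAt (UU n)
      ((-(n : ℝ) * (‖x‖ ^ (n+2))⁻¹) • ∑ i : Fin m, (x i) • (EuclideanSpace.proj (𝕜 := ℝ) i)) x := by
  have hnorm : (0:ℝ) < ‖x‖ := norm_pos_iff.mpr hx
  have h1 : HasDerivAt (fun t : ℝ => (t ^ n)⁻¹)
      (-(↑n * ‖x‖ ^ (n-1)) / (‖x‖ ^ n) ^ 2) ‖x‖ :=
    (hasDerivAt_pow n ‖x‖).inv (by positivity)
  have h2 := h1.comp_hasFDerivAt x (hasFDerivAt_norm' hx)
  have h2' : HasFDerivAt (UU n : EE m → ℝ)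
      ((-(↑n * ‖x‖ ^ (n-1)) / (‖x‖ ^ n) ^ 2) • ((‖x‖⁻¹) • ∑ i : Fin m, (x i) • (EuclideanSpace.proj (𝕜 := ℝ) i))) x := h2
  convert h2' using 1
  rw [smul_smul]
  congr 1
  rcases n with _ | k
  · simp
  · have hk : (k + 1 - 1) = k := rfl
    rw [hk]
    field_simp
    ring

theorem diff_UU (hx : x ≠ 0) (n : ℕ) : DifferentiableAt ℝ (UU (m := m) n) x :=
  (hasFDerivAt_UU hx n).differentiableAt

theorem pd_UU (hx : x ≠ 0) (n : ℕ) (a : Fin m) :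
    pd a (UU n) x = -(n : ℝ) * (x a * UU (n+2) x) := by
  unfold pd
  rw [(hasFDerivAt_UU hx n).fderiv]
  simp [EuclideanSpace.proj, EuclideanSpace.single_apply, UU]
  ring

end Toolkit
section Part2

variable {m : ℕ} {x : EE m}

theorem UU_zero (x : EE m) : UU 0 x = 1 := by simp [UU]

theorem UU_mul (n k : ℕ) (y : EE m) : UU n y * UU k y = UU (n + k) y := by
  simp [UU, pow_add, mul_inv]; ring

theorem UU_pos (hx : x ≠ 0) (n : ℕ) : 0 < UU n x := by
  have : (0:ℝ) < ‖x‖ := norm_pos_iff.mpr hx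
  simp only [UU]
  positivity

theorem UU_step (hx : x ≠ 0) (n : ℕ) : ‖x‖ ^ 2 * UU (n + 2) x = UU n x := by
  have h : ‖x‖ ≠ 0 := norm_ne_zero_iff.mpr hx
  simp only [UU, pow_add]
  field_simp

theorem sum_coord_sq (x : EE m) : ∑ a, x a * x a = ‖x‖ ^ 2 := by
  rw [norm_sq_eq_sum]
  exact Finset.sum_congr rfl fun a _ => (sq (x a)).symm ▸ by ring

theorem UU_e2 (n : ℕ) (y : EE m) : UU (n + 2) y = UU n y * UU 2 y := (UU_mul n 2 y).symm

theorem UU_e4 (n : ℕ) (y : EE m) : UU (n + 4) y = UU n y * UU 2 y ^ 2 := by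
  rw [show n + 4 = n + 2 + 2 from rfl, UU_e2, UU_e2]; ring

theorem UU_e6 (n : ℕ) (y : EE m) : UU (n + 6) y = UU n y * UU 2 y ^ 3 := by
  rw [show n + 6 = n + 4 + 2 from rfl, UU_e2, UU_e4]; ring

theorem WW_shift (n : ℕ) (i j k : Fin m) (y : EE m) :
    UU 2 y * WW m n i j k y = WW m (n + 2) i j k y := by
  simp only [WW, UU, show (4:ℕ) = 2+2 from rfl, pow_add, mul_inv]
  ring

theorem FF_succ (n : ℕ) (i j k a : Fin m) (y : EE m) :
    FF m (n + 2) i j k a y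
      = UU 2 y * FF m n i j k a y - 2 * y a * WW m (n + 4) i j k y := by
  simp only [FF, WW, UU, show (4:ℕ) = 2+2 from rfl, pow_add, mul_inv]
  push_cast
  ring

-- differentiability of the building blocks
theorem diff_cu (hx : x ≠ 0) (i : Fin m) (n : ℕ) :
    DifferentiableAt ℝ (fun y : EE m => y i * UU n y) x :=
  (diff_coord i x).mul (diff_UU hx n)

theorem diff_ccu (hx : x ≠ 0) (i j : Fin m) (n : ℕ) :
    DifferentiableAt ℝ (fun y : EE m => y i * (y j * UU n y)) x :=
  (diff_coord i x).mul (diff_cu hx j n)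

theorem diff_cccu (hx : x ≠ 0) (i j k : Fin m) (n : ℕ) :
    DifferentiableAt ℝ (fun y : EE m => y i * (y j * (y k * UU n y))) x :=
  (diff_coord i x).mul (diff_ccu hx j k n)

theorem diff_ccccu (hx : x ≠ 0) (i j k l : Fin m) (n : ℕ) :
    DifferentiableAt ℝ (fun y : EE m => y i * (y j * (y k * (y l * UU n y)))) x :=
  (diff_coord i x).mul (diff_cccu hx j k l n)

theorem diff_WW (hx : x ≠ 0) (n : ℕ) (i j k : Fin m) :
    DifferentiableAt ℝ (WW m n i j k) x := by
  unfold WW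
  exact ((((diff_cu hx k n).const_mul _).add ((diff_cu hx i n).const_mul _)).add
    ((diff_cu hx j n).const_mul _)).sub ((diff_cccu hx i j k (n+2)).const_mul _) |>.const_mul _

theorem diff_FF (hx : x ≠ 0) (n : ℕ) (i j k a : Fin m) :
    DifferentiableAt ℝ (FF m n i j k a) x := by
  unfold FF
  refine ((((((diff_UU hx n).const_mul _).sub ?_).sub ?_).add ?_).const_mul _)
  · exact ((((diff_ccu hx k a (n+2)).const_mul _).add ((diff_ccu hx i a (n+2)).const_mul _)).add
      ((diff_ccu hx j a (n+2)).const_mul _)).const_mul _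
  · exact ((((diff_ccu hx j k (n+2)).const_mul _).add ((diff_ccu hx i k (n+2)).const_mul _)).add
      ((diff_ccu hx i j (n+2)).const_mul _)).const_mul _
  · exact (diff_ccccu hx i j k a (n+4)).const_mul _

-- partial derivatives of building blocks
theorem pd_cu (hx : x ≠ 0) (a i : Fin m) (n : ℕ) :
    pd a (fun y : EE m => y i * UU n y) x
      = dlt i a * UU n x - (n : ℝ) * (x i * (x a * UU (n+2) x)) := by
  rw [pd_mul a (diff_coord i x) (diff_UU hx n), pd_coord, pd_UU hx]
  ring

theorem pd_ccu (hx : x ≠ 0) (a i j : Fin m) (n : ℕ) :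
    pd a (fun y : EE m => y i * (y j * UU n y)) x
      = dlt i a * (x j * UU n x) + dlt j a * (x i * UU n x)
        - (n : ℝ) * (x i * (x j * (x a * UU (n+2) x))) := by
  rw [pd_mul a (diff_coord i x) (diff_cu hx j n), pd_coord, pd_cu hx]
  ring

theorem pd_cccu (hx : x ≠ 0) (a i j k : Fin m) (n : ℕ) :
    pd a (fun y : EE m => y i * (y j * (y k * UU n y))) x
      = dlt i a * (x j * (x k * UU n x)) + dlt j a * (x i * (x k * UU n x))
        + dlt k a * (x i * (x j * UU n x))
        - (n : ℝ) * (x i * (x j * (x k * (x a * UU (n+2) x)))) := by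
  rw [pd_mul a (diff_coord i x) (diff_ccu hx j k n), pd_coord, pd_ccu hx]
  ring

theorem pd_ccccu (hx : x ≠ 0) (a i j k l : Fin m) (n : ℕ) :
    pd a (fun y : EE m => y i * (y j * (y k * (y l * UU n y)))) x
      = dlt i a * (x j * (x k * (x l * UU n x))) + dlt j a * (x i * (x k * (x l * UU n x)))
        + dlt k a * (x i * (x j * (x l * UU n x))) + dlt l a * (x i * (x j * (x k * UU n x)))
        - (n : ℝ) * (x i * (x j * (x k * (x l * (x a * UU (n+2) x))))) := by
  rw [pd_mul a (diff_coord i x) (diff_cccu hx j k l n), pd_coord, pd_cccu hx]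
  ring

theorem pd_WW (hx : x ≠ 0) (n : ℕ) (i j k a : Fin m) :
    pd a (WW m n i j k) x = FF m n i j k a x := by
  unfold WW
  rw [pd_const_mul]
  rw [pd_sub a ((((diff_cu hx k n).const_mul _).fun_add ((diff_cu hx i n).const_mul _)).fun_add
    ((diff_cu hx j n).const_mul _)) ((diff_cccu hx i j k (n+2)).const_mul _)]
  rw [pd_add a (((diff_cu hx k n).const_mul _).fun_add ((diff_cu hx i n).const_mul _))
    ((diff_cu hx j n).const_mul _)]
  rw [pd_add a ((diff_cu hx k n).const_mul _) ((diff_cu hx i n).const_mul _)]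
  rw [pd_const_mul, pd_const_mul, pd_const_mul, pd_const_mul]
  rw [pd_cu hx, pd_cu hx, pd_cu hx, pd_cccu hx]
  unfold FF
  push_cast
  ring

end Part2
section Part3

variable {m : ℕ} {x : EE m}

theorem sum_dlt_x (p : Fin m) (x : EE m) : ∑ a, dlt p a * x a = x p := by
  simp [dlt, ite_mul, Finset.sum_ite_eq]

theorem sum_dlt_dlt (p q : Fin m) : ∑ a, dlt p a * dlt q a = dlt p q := by
  simp [dlt, ite_mul, Finset.sum_ite_eq, eq_comm]

theorem sum_dlt_diag (m : ℕ) : ∑ a : Fin m, dlt a a = m := by simp [dlt]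

theorem pd_FF_diag (hx : x ≠ 0) (n : ℕ) (i j k a : Fin m) :
    pd a (FF m n i j k a) x =
      cMN m * (
        (-2*(n:ℝ) * (dlt i j * UU (n+2) x) + 2*((m:ℝ)+2)*((n:ℝ)+2) * (x i * (x j * UU (n+4) x))) * (dlt k a * x a)
      + (-2*(n:ℝ) * (dlt j k * UU (n+2) x) + 2*((m:ℝ)+2)*((n:ℝ)+2) * (x j * (x k * UU (n+4) x))) * (dlt i a * x a)
      + (-2*(n:ℝ) * (dlt i k * UU (n+2) x) + 2*((m:ℝ)+2)*((n:ℝ)+2) * (x i * (x k * UU (n+4) x))) * (dlt j a * x a)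
      + (-2*((m:ℝ)+2) * (x k * UU (n+2) x)) * (dlt i a * dlt j a)
      + (-2*((m:ℝ)+2) * (x j * UU (n+2) x)) * (dlt i a * dlt k a)
      + (-2*((m:ℝ)+2) * (x i * UU (n+2) x)) * (dlt j a * dlt k a)
      + (-(n:ℝ) * ((dlt i j * x k + dlt j k * x i + dlt i k * x j) * UU (n+2) x)
          + ((n:ℝ)+2)*((m:ℝ)+2) * (x i * (x j * (x k * UU (n+4) x)))) * (dlt a a)
      + ((n:ℝ)*((n:ℝ)+2) * ((dlt i j * x k + dlt j k * x i + dlt i k * x j) * UU (n+4) x)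
          - ((n:ℝ)+2)*((m:ℝ)+2)*((n:ℝ)+4) * (x i * (x j * (x k * UU (n+6) x)))) * (x a * x a) ) := by
  have dT1 : DifferentiableAt ℝ
      (fun y : EE m => (dlt i j * dlt k a + dlt j k * dlt i a + dlt i k * dlt j a) * UU n y) x :=
    (diff_UU hx n).const_mul _
  have dT2 : DifferentiableAt ℝ
      (fun y : EE m => (n:ℝ) * (dlt i j * (y k * (y a * UU (n+2) y)) + dlt j k * (y i * (y a * UU (n+2) y))
        + dlt i k * (y j * (y a * UU (n+2) y)))) x :=
    ((((diff_ccu hx k a (n+2)).const_mul _).add ((diff_ccu hx i a (n+2)).const_mul _)).add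
      ((diff_ccu hx j a (n+2)).const_mul _)).const_mul _
  have dT3 : DifferentiableAt ℝ
      (fun y : EE m => ((m:ℝ)+2) * (dlt i a * (y j * (y k * UU (n+2) y)) + dlt j a * (y i * (y k * UU (n+2) y))
        + dlt k a * (y i * (y j * UU (n+2) y)))) x :=
    ((((diff_ccu hx j k (n+2)).const_mul _).add ((diff_ccu hx i k (n+2)).const_mul _)).add
      ((diff_ccu hx i j (n+2)).const_mul _)).const_mul _
  have dT4 : DifferentiableAt ℝ
      (fun y : EE m => ((n:ℝ)+2)*((m:ℝ)+2) * (y i * (y j * (y k * (y a * UU (n+4) y))))) x :=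
    (diff_ccccu hx i j k a (n+4)).const_mul _
  unfold FF
  rw [pd_const_mul]
  rw [pd_add _ ((dT1.fun_sub dT2).fun_sub dT3) dT4]
  rw [pd_sub _ (dT1.fun_sub dT2) dT3]
  rw [pd_sub _ dT1 dT2]
  rw [pd_const_mul, pd_const_mul, pd_const_mul, pd_const_mul]
  rw [pd_add _ (((diff_ccu hx k a (n+2)).const_mul _).fun_add ((diff_ccu hx i a (n+2)).const_mul _))
    ((diff_ccu hx j a (n+2)).const_mul _)]
  rw [pd_add _ ((diff_ccu hx k a (n+2)).const_mul _) ((diff_ccu hx i a (n+2)).const_mul _)]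
  rw [pd_add _ (((diff_ccu hx j k (n+2)).const_mul _).fun_add ((diff_ccu hx i k (n+2)).const_mul _))
    ((diff_ccu hx i j (n+2)).const_mul _)]
  rw [pd_add _ ((diff_ccu hx j k (n+2)).const_mul _) ((diff_ccu hx i k (n+2)).const_mul _)]
  rw [pd_const_mul, pd_const_mul, pd_const_mul, pd_const_mul, pd_const_mul, pd_const_mul]
  rw [pd_UU hx, pd_ccu hx, pd_ccu hx, pd_ccu hx, pd_ccu hx, pd_ccu hx, pd_ccu hx, pd_ccccu hx]
  rw [show n+2+2 = n+4 from rfl, show n+4+2 = n+6 from rfl]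
  push_cast
  ring

theorem lap_WW (hx : x ≠ 0) (n : ℕ) (i j k : Fin m) :
    lap (WW m n i j k) x = ((n:ℝ)^2 - m*n - 2*m - 4) * WW m (n+2) i j k x := by
  unfold lap
  have h1 : ∀ a : Fin m, pd a (pd a (WW m n i j k)) x = pd a (FF m n i j k a) x :=
    fun a => pd_congr a hx (fun y hy => pd_WW hy n i j k a)
  rw [Finset.sum_congr rfl (fun a _ => (h1 a).trans (pd_FF_diag hx n i j k a))]
  simp only [← Finset.mul_sum, Finset.sum_add_distrib]
  rw [sum_dlt_x k x, sum_dlt_x i x, sum_dlt_x j x, sum_dlt_dlt i j, sum_dlt_dlt i k,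
    sum_dlt_dlt j k, sum_dlt_diag m, sum_coord_sq x]
  simp only [WW]
  rw [show n+2+2 = n+4 from rfl,
    show UU (n+2) x = ‖x‖^2 * UU (n+4) x from (UU_step hx (n+2)).symm,
    show UU (n+4) x = ‖x‖^2 * UU (n+6) x from (UU_step hx (n+4)).symm]
  push_cast
  ring

theorem lap_UU (hx : x ≠ 0) (n : ℕ) :
    lap (UU n) x = (n:ℝ)*((n:ℝ)+2-(m:ℝ)) * UU (n+2) x := by
  unfold lap
  have h1 : ∀ a : Fin m, pd a (pd a (UU n)) x
      = pd a (fun y : EE m => -(n:ℝ) * (y a * UU (n+2) y)) x :=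
    fun a => pd_congr a hx (fun y hy => pd_UU hy n a)
  have h2 : ∀ a : Fin m, pd a (fun y : EE m => -(n:ℝ) * (y a * UU (n+2) y)) x
      = (-(n:ℝ) * UU (n+2) x) * dlt a a + ((n:ℝ)*((n:ℝ)+2) * UU (n+4) x) * (x a * x a) := by
    intro a
    rw [pd_const_mul, pd_cu hx]
    rw [show n+2+2 = n+4 from rfl]
    push_cast
    ring
  rw [Finset.sum_congr rfl (fun a _ => (h1 a).trans (h2 a))]
  simp only [← Finset.mul_sum, Finset.sum_add_distrib]
  rw [sum_dlt_diag m, sum_coord_sq x]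
  rw [show UU (n+2) x = ‖x‖^2 * UU (n+4) x from (UU_step hx (n+2)).symm]
  ring

theorem sum_x_FF (hx : x ≠ 0) (n : ℕ) (i j k : Fin m) :
    ∑ a, x a * FF m n i j k a x = (1 - (n:ℝ)) * WW m n i j k x := by
  have h1 : ∀ a : Fin m, x a * FF m n i j k a x =
      cMN m * (
        ((dlt i j * UU n x) * (dlt k a * x a) + (dlt j k * UU n x) * (dlt i a * x a)
          + (dlt i k * UU n x) * (dlt j a * x a))
      + (-((m:ℝ)+2) * (x j * (x k * UU (n+2) x))) * (dlt i a * x a)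
      + (-((m:ℝ)+2) * (x i * (x k * UU (n+2) x))) * (dlt j a * x a)
      + (-((m:ℝ)+2) * (x i * (x j * UU (n+2) x))) * (dlt k a * x a)
      + (-(n:ℝ) * ((dlt i j * x k + dlt j k * x i + dlt i k * x j) * UU (n+2) x)
          + ((n:ℝ)+2)*((m:ℝ)+2) * (x i * (x j * (x k * UU (n+4) x)))) * (x a * x a)) := by
    intro a
    simp only [FF]
    ring
  rw [Finset.sum_congr rfl (fun a _ => h1 a)]
  simp only [← Finset.mul_sum, Finset.sum_add_distrib]
  rw [sum_dlt_x k x, sum_dlt_x i x, sum_dlt_x j x, sum_coord_sq x]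
  simp only [WW]
  rw [show UU n x = ‖x‖^2 * UU (n+2) x from (UU_step hx n).symm,
    show UU (n+2) x = ‖x‖^2 * UU (n+4) x from (UU_step hx (n+2)).symm]
  ring

end Part3
section Part4

variable {m : ℕ} {x : EE m}

theorem dlt_self (p : Fin m) : dlt p p = 1 := by simp [dlt]

theorem dlt_comm (p q : Fin m) : dlt p q = dlt q p := by simp [dlt, eq_comm]

theorem sum_const_fin (c : ℝ) : ∑ _a : Fin m, c = (m : ℝ) * c := by
  simp [Finset.sum_const, Finset.card_univ, nsmul_eq_mul]

theorem hm_pos {m : ℕ} (hm : 2 ≤ m) : (0:ℝ) < ((m:ℝ) - 1) * ((m:ℝ) + 2) := by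
  have : (2:ℝ) ≤ (m:ℝ) := by exact_mod_cast hm
  nlinarith

theorem cMN_sq {m : ℕ} (hm : 2 ≤ m) : cMN m ^ 2 = 1 / (((m:ℝ)-1) * ((m:ℝ)+2)) := by
  unfold cMN
  rw [div_pow, one_pow, sq_sqrt (le_of_lt (hm_pos hm))]

theorem normSq_WW (hm : 2 ≤ m) (hx : x ≠ 0) :
    ∑ p : Fin m × Fin m × Fin m, (WW m 1 p.1 p.2.1 p.2.2 x) ^ 2 = 1 := by
  have hnx : ‖x‖ ≠ 0 := norm_ne_zero_iff.mpr hx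
  have hk : ∀ i j : Fin m, ∑ k, (WW m 1 i j k x) ^ 2 =
      cMN m ^ 2 * (
        ((dlt i j * dlt i j) * (UU 1 x * UU 1 x)
          - 2*((m:ℝ)+2) * ((dlt i j * (x i * x j)) * (UU 1 x * UU 3 x))
          + ((m:ℝ)+2)^2 * ((x i * x i) * ((x j * x j) * (UU 3 x * UU 3 x)))) * (‖x‖^2)
        + ((x i * x i) * (UU 1 x * UU 1 x))
        + ((x j * x j) * (UU 1 x * UU 1 x))
        + (2 * (dlt i j * (x i * (UU 1 x * UU 1 x)))
            - 2*((m:ℝ)+2) * ((x i * (x i * x j)) * (UU 1 x * UU 3 x))) * (x j)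
        + (2 * (dlt i j * (x j * (UU 1 x * UU 1 x)))
            - 2*((m:ℝ)+2) * ((x j * (x i * x j)) * (UU 1 x * UU 3 x))) * (x i)
        + (2 * (x i * (x j * (UU 1 x * UU 1 x)))) * dlt i j ) := by
    intro i j
    have h1 : ∀ k : Fin m, (WW m 1 i j k x) ^ 2 =
        cMN m ^ 2 * (
          ((dlt i j * dlt i j) * (UU 1 x * UU 1 x)
            - 2*((m:ℝ)+2) * ((dlt i j * (x i * x j)) * (UU 1 x * UU 3 x))
            + ((m:ℝ)+2)^2 * ((x i * x i) * ((x j * x j) * (UU 3 x * UU 3 x)))) * (x k * x k)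
          + ((x i * x i) * (UU 1 x * UU 1 x)) * (dlt j k * dlt j k)
          + ((x j * x j) * (UU 1 x * UU 1 x)) * (dlt i k * dlt i k)
          + (2 * (dlt i j * (x i * (UU 1 x * UU 1 x)))
              - 2*((m:ℝ)+2) * ((x i * (x i * x j)) * (UU 1 x * UU 3 x))) * (dlt j k * x k)
          + (2 * (dlt i j * (x j * (UU 1 x * UU 1 x)))
              - 2*((m:ℝ)+2) * ((x j * (x i * x j)) * (UU 1 x * UU 3 x))) * (dlt i k * x k)
          + (2 * (x i * (x j * (UU 1 x * UU 1 x)))) * (dlt j k * dlt i k) ) := by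
      intro k
      simp only [WW, show (1:ℕ)+2 = 3 from rfl]
      ring
    rw [Finset.sum_congr rfl (fun k _ => h1 k)]
    simp only [← Finset.mul_sum, Finset.sum_add_distrib]
    rw [sum_coord_sq x, sum_dlt_dlt j j, sum_dlt_dlt i i, sum_dlt_x j x, sum_dlt_x i x,
      sum_dlt_dlt j i, dlt_self, dlt_self, dlt_comm j i]
    ring
  have hj : ∀ i : Fin m, ∑ j, ∑ k, (WW m 1 i j k x) ^ 2 =
      cMN m ^ 2 * ( 2 * ((UU 1 x * UU 1 x) * ‖x‖^2)
        + (((m:ℝ)+6) * (UU 1 x * UU 1 x) - 6*((m:ℝ)+2) * ((UU 1 x * UU 3 x) * ‖x‖^2)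
            + ((m:ℝ)+2)^2 * ((UU 3 x * UU 3 x) * (‖x‖^2 * ‖x‖^2))) * (x i * x i) ) := by
    intro i
    have h2 : ∀ j : Fin m, ∑ k, (WW m 1 i j k x) ^ 2 =
        ((UU 1 x * UU 1 x) * ‖x‖^2 * cMN m ^ 2) * (dlt i j * dlt i j)
        + (cMN m ^ 2 * (-2*((m:ℝ)+2) * (x i * ((UU 1 x * UU 3 x) * ‖x‖^2))
            + 6 * (x i * (UU 1 x * UU 1 x)))) * (dlt i j * x j)
        + (cMN m ^ 2 * (((m:ℝ)+2)^2 * ((x i * x i) * ((UU 3 x * UU 3 x) * ‖x‖^2))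
            + (UU 1 x * UU 1 x)
            - 4*((m:ℝ)+2) * ((x i * x i) * (UU 1 x * UU 3 x)))) * (x j * x j)
        + (cMN m ^ 2 * ((x i * x i) * (UU 1 x * UU 1 x))) := by
      intro j
      rw [hk i j]
      ring
    rw [Finset.sum_congr rfl (fun j _ => h2 j)]
    simp only [← Finset.mul_sum, Finset.sum_add_distrib]
    rw [sum_coord_sq x, sum_dlt_dlt i i, sum_dlt_x i x, dlt_self, sum_const_fin]
    ring
  rw [Fintype.sum_prod_type]
  have hsplit : ∀ i : Fin m, ∑ q : Fin m × Fin m, (WW m 1 i q.1 q.2 x) ^ 2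
      = ∑ j, ∑ k, (WW m 1 i j k x) ^ 2 := fun i => Fintype.sum_prod_type _
  rw [Finset.sum_congr rfl (fun i _ => (hsplit i).trans (hj i))]
  simp only [← Finset.mul_sum, Finset.sum_add_distrib]
  rw [sum_coord_sq x, sum_const_fin]
  rw [cMN_sq hm]
  simp only [UU]
  have h1 : ((m:ℝ) - 1) * ((m:ℝ) + 2) ≠ 0 := ne_of_gt (hm_pos hm)
  field_simp
  have h1' : (-1 + (m:ℝ)) ≠ 0 := by
    have : (2:ℝ) ≤ (m:ℝ) := by exact_mod_cast hm
    linarith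
  ring_nf
  field_simp
  ring

end Part4
set_option maxHeartbeats 1000000

section Part5

variable {m : ℕ} {x : EE m}

theorem sum_pd_FF (hx : x ≠ 0) (n : ℕ) (i j k : Fin m) :
    ∑ K, pd K (FF m n i j k K) x = ((n:ℝ)^2 - m*n - 2*m - 4) * WW m (n+2) i j k x := by
  rw [← lap_WW hx n i j k]
  unfold lap
  exact Finset.sum_congr rfl fun K _ => (pd_congr K hx fun y hy => pd_WW hy n i j k K).symm

theorem sum_WW_FF (hm : 2 ≤ m) (hx : x ≠ 0) (K : Fin m) :
    ∑ p : Fin m × Fin m × Fin m,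
      WW m 1 p.1 p.2.1 p.2.2 x * FF m 1 p.1 p.2.1 p.2.2 K x = 0 := by
  have h0 : pd K (fun y : EE m => ∑ p : Fin m × Fin m × Fin m,
      WW m 1 p.1 p.2.1 p.2.2 y * WW m 1 p.1 p.2.1 p.2.2 y) x = 0 := by
    have hval : ∀ y : EE m, y ≠ 0 → (∑ p : Fin m × Fin m × Fin m,
        WW m 1 p.1 p.2.1 p.2.2 y * WW m 1 p.1 p.2.1 p.2.2 y) = (1:ℝ) := by
      intro y hy
      calc ∑ p : Fin m × Fin m × Fin m, WW m 1 p.1 p.2.1 p.2.2 y * WW m 1 p.1 p.2.1 p.2.2 y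
          = ∑ p : Fin m × Fin m × Fin m, (WW m 1 p.1 p.2.1 p.2.2 y)^2 :=
            Finset.sum_congr rfl fun p _ => (pow_two _).symm
        _ = 1 := normSq_WW hm hy
    rw [pd_congr K hx hval, pd_const]
  have hps := pd_sum (x := x) K
      (f := fun (p : Fin m × Fin m × Fin m) (y : EE m) =>
        WW m 1 p.1 p.2.1 p.2.2 y * WW m 1 p.1 p.2.1 p.2.2 y)
      (fun p => (diff_WW hx 1 p.1 p.2.1 p.2.2).mul (diff_WW hx 1 p.1 p.2.1 p.2.2))
  rw [hps] at h0
  have h1 : ∀ p : Fin m × Fin m × Fin m,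
      pd K (fun y => WW m 1 p.1 p.2.1 p.2.2 y * WW m 1 p.1 p.2.1 p.2.2 y) x
        = 2 * (WW m 1 p.1 p.2.1 p.2.2 x * FF m 1 p.1 p.2.1 p.2.2 K x) := by
    intro p
    rw [pd_mul K (diff_WW hx 1 _ _ _) (diff_WW hx 1 _ _ _), pd_WW hx]
    ring
  rw [Finset.sum_congr rfl (fun p _ => h1 p), ← Finset.mul_sum] at h0
  linarith [h0]

theorem sum_FF_sq (hm : 2 ≤ m) (hx : x ≠ 0) :
    ∑ K : Fin m, ∑ p : Fin m × Fin m × Fin m,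
      (FF m 1 p.1 p.2.1 p.2.2 K x)^2 = (3*(m:ℝ)+3) * UU 2 x := by
  have key : ∀ K : Fin m, ∑ p : Fin m × Fin m × Fin m, (FF m 1 p.1 p.2.1 p.2.2 K x)^2
      = - ∑ p : Fin m × Fin m × Fin m,
          WW m 1 p.1 p.2.1 p.2.2 x * pd K (FF m 1 p.1 p.2.1 p.2.2 K) x := by
    intro K
    have h0 : pd K (fun y : EE m => ∑ p : Fin m × Fin m × Fin m,
        WW m 1 p.1 p.2.1 p.2.2 y * FF m 1 p.1 p.2.1 p.2.2 K y) x = 0 := by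
      rw [pd_congr K hx (g := fun _ => (0:ℝ)) (fun y hy => sum_WW_FF hm hy K), pd_const]
    have hps := pd_sum (x := x) K
        (f := fun (p : Fin m × Fin m × Fin m) (y : EE m) =>
          WW m 1 p.1 p.2.1 p.2.2 y * FF m 1 p.1 p.2.1 p.2.2 K y)
        (fun p => (diff_WW hx 1 p.1 p.2.1 p.2.2).mul (diff_FF hx 1 p.1 p.2.1 p.2.2 K))
    rw [hps] at h0
    have h1 : ∀ p : Fin m × Fin m × Fin m,
        pd K (fun y => WW m 1 p.1 p.2.1 p.2.2 y * FF m 1 p.1 p.2.1 p.2.2 K y) x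
          = (FF m 1 p.1 p.2.1 p.2.2 K x)^2
            + WW m 1 p.1 p.2.1 p.2.2 x * pd K (FF m 1 p.1 p.2.1 p.2.2 K) x := by
      intro p
      rw [pd_mul K (diff_WW hx 1 _ _ _) (diff_FF hx 1 _ _ _ _), pd_WW hx]
      ring
    rw [Finset.sum_congr rfl (fun p _ => h1 p), Finset.sum_add_distrib] at h0
    linarith [h0]
  rw [Finset.sum_congr rfl (fun K (_ : K ∈ Finset.univ) => key K)]
  rw [Finset.sum_neg_distrib, Finset.sum_comm]
  have h2 : ∀ p : Fin m × Fin m × Fin m,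
      ∑ K : Fin m, WW m 1 p.1 p.2.1 p.2.2 x * pd K (FF m 1 p.1 p.2.1 p.2.2 K) x
        = WW m 1 p.1 p.2.1 p.2.2 x * (((1:ℝ)^2 - m*1 - 2*m - 4) * WW m (1+2) p.1 p.2.1 p.2.2 x) := by
    intro p
    rw [← Finset.mul_sum, sum_pd_FF hx 1]
    norm_num
  rw [Finset.sum_congr rfl (fun p _ => h2 p)]
  have h3 : ∀ p : Fin m × Fin m × Fin m,
      WW m 1 p.1 p.2.1 p.2.2 x * (((1:ℝ)^2 - m*1 - 2*m - 4) * WW m (1+2) p.1 p.2.1 p.2.2 x)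
        = (-(3*(m:ℝ)+3) * UU 2 x) * ((WW m 1 p.1 p.2.1 p.2.2 x)^2) := by
    intro p
    rw [show (1:ℕ)+2 = 3 from rfl, ← WW_shift 1 p.1 p.2.1 p.2.2 x]
    ring
  rw [Finset.sum_congr rfl (fun p _ => h3 p), ← Finset.mul_sum, normSq_WW hm hx, mul_one]
  ring

end Part5
section Part6

variable {m : ℕ} {x : EE m} (β : ℝ)

theorem lap_const (c : ℝ) (x : EE m) : lap (fun _ : EE m => c) x = 0 := by
  unfold lap
  refine Finset.sum_eq_zero fun a _ => ?_
  have h : pd a (fun _ : EE m => c) = (fun _ : EE m => (0:ℝ)) :=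
    funext fun y => pd_const a c
  rw [h, pd_const]

theorem lap_const_mul (c : ℝ) (f : EE m → ℝ) (x : EE m) :
    lap (fun y => c * f y) x = c * lap f x := by
  unfold lap
  rw [Finset.mul_sum]
  refine Finset.sum_congr rfl fun a _ => ?_
  have h : pd a (fun y => c * f y) = fun y => c * pd a f y :=
    funext fun y => pd_const_mul a c f y
  rw [h, pd_const_mul]

theorem vT_inl (p : Fin m × Fin m × Fin m) :
    vTilde m β (Sum.inl p) = fun y => Real.sin β * WW m 1 p.1 p.2.1 p.2.2 y := by
  funext y
  show Real.sin β * vMN m p.1 p.2.1 p.2.2 y = _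
  rw [vMN_eq_WW]

theorem vT_inr (u : Unit) : vTilde m β (Sum.inr u) = fun _ => Real.cos β := rfl

theorem pd_vT_inl (p : Fin m × Fin m × Fin m) (a : Fin m) {y : EE m} (hy : y ≠ 0) :
    pd a (vTilde m β (Sum.inl p)) y = Real.sin β * FF m 1 p.1 p.2.1 p.2.2 a y := by
  rw [vT_inl, pd_const_mul, pd_WW hy]

theorem pd_vT_inr (u : Unit) (a : Fin m) (y : EE m) :
    pd a (vTilde m β (Sum.inr u)) y = 0 := by
  rw [vT_inr]; exact pd_const a _

theorem lap_vT_inl (p : Fin m × Fin m × Fin m) {y : EE m} (hy : y ≠ 0) :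
    lap (vTilde m β (Sum.inl p)) y
      = Real.sin β * ((-(3*(m:ℝ))-3) * WW m 3 p.1 p.2.1 p.2.2 y) := by
  rw [vT_inl, lap_const_mul, lap_WW hy 1]
  push_cast
  ring

theorem lap_vT_inr (u : Unit) (y : EE m) : lap (vTilde m β (Sum.inr u)) y = 0 := by
  rw [vT_inr]; exact lap_const _ y

theorem gradSq_vT (hm : 2 ≤ m) {y : EE m} (hy : y ≠ 0) :
    gradSq (vTilde m β) y = (Real.sin β^2 * (3*(m:ℝ)+3)) * UU 2 y := by
  unfold gradSq
  have hK : ∀ K : Fin m, ∑ b : (Fin m × Fin m × Fin m) ⊕ Unit, (pd K (vTilde m β b) y)^2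
      = Real.sin β^2 * ∑ p : Fin m × Fin m × Fin m, (FF m 1 p.1 p.2.1 p.2.2 K y)^2 := by
    intro K
    rw [Fintype.sum_sum_type]
    have h1 : ∀ u : Unit, (pd K (vTilde m β (Sum.inr u)) y)^2 = 0 := fun u => by
      rw [pd_vT_inr]; ring
    have h2 : ∀ p : Fin m × Fin m × Fin m, (pd K (vTilde m β (Sum.inl p)) y)^2
        = Real.sin β^2 * (FF m 1 p.1 p.2.1 p.2.2 K y)^2 := fun p => by
      rw [pd_vT_inl β p K hy]; ring
    rw [Finset.sum_congr rfl (fun u _ => h1 u), Finset.sum_congr rfl (fun p _ => h2 p),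
      ← Finset.mul_sum]
    simp
  rw [Finset.sum_congr rfl (fun K _ => hK K), ← Finset.mul_sum, sum_FF_sq hm hy]
  ring

theorem lap_gradSq_vT (hm : 2 ≤ m) (hx : x ≠ 0) :
    lap (gradSq (vTilde m β)) x
      = (Real.sin β^2 * (3*(m:ℝ)+3)) * (((8:ℝ) - 2*(m:ℝ)) * UU 4 x) := by
  rw [lap_congr hx (fun y hy => gradSq_vT β hm hy)]
  rw [lap_const_mul, lap_UU hx 2]
  norm_num
  left; left; ring

end Part6
section Part7

variable {m : ℕ} {x : EE m} (β : ℝ)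

theorem UU_sq (x : EE m) : (UU 2 x)^2 = UU 4 x := by
  rw [pow_two]
  exact UU_mul 2 2 x

theorem laplap_inr (u : Unit) (x : EE m) :
    lap (lap (vTilde m β (Sum.inr u))) x = 0 := by
  have h : lap (vTilde m β (Sum.inr u)) = fun _ : EE m => (0:ℝ) :=
    funext fun y => lap_vT_inr β u y
  rw [h]
  exact lap_const 0 x

theorem div_inr (u : Unit) (K : Fin m) (x : EE m) :
    pd K (fun y => gradSq (vTilde m β) y * pd K (vTilde m β (Sum.inr u)) y) x = 0 := by
  have h : (fun y => gradSq (vTilde m β) y * pd K (vTilde m β (Sum.inr u)) y)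
      = fun _ : EE m => (0:ℝ) := funext fun y => by rw [pd_vT_inr]; ring
  rw [h]
  exact pd_const K 0

theorem laplap_inl (hx : x ≠ 0) (p : Fin m × Fin m × Fin m) :
    lap (lap (vTilde m β (Sum.inl p))) x
      = (Real.sin β * ((-(3*(m:ℝ))-3) * (5 - 5*(m:ℝ)))) * WW m 5 p.1 p.2.1 p.2.2 x := by
  rw [lap_congr hx (fun y hy => lap_vT_inl β p hy)]
  rw [lap_const_mul, lap_const_mul, lap_WW hx 3]
  have h5 : WW m (3+2) p.1 p.2.1 p.2.2 x = WW m 5 p.1 p.2.1 p.2.2 x := rfl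
  rw [h5]
  push_cast
  ring

theorem WW15 (hx : x ≠ 0) (p : Fin m × Fin m × Fin m) :
    UU 4 x * WW m 1 p.1 p.2.1 p.2.2 x = WW m 5 p.1 p.2.1 p.2.2 x := by
  have h4 : UU 4 x = UU 2 x * UU 2 x := (UU_mul 2 2 x).symm
  rw [h4, mul_assoc, WW_shift 1]
  exact WW_shift 3 p.1 p.2.1 p.2.2 x

theorem div_inl (hm : 2 ≤ m) (hx : x ≠ 0) (p : Fin m × Fin m × Fin m) :
    ∑ K : Fin m, pd K (fun y => gradSq (vTilde m β) y * pd K (vTilde m β (Sum.inl p)) y) x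
      = ((Real.sin β^2*(3*(m:ℝ)+3)) * Real.sin β * (-(3*(m:ℝ))-3)) * WW m 5 p.1 p.2.1 p.2.2 x := by
  have hK : ∀ K : Fin m,
      pd K (fun y => gradSq (vTilde m β) y * pd K (vTilde m β (Sum.inl p)) y) x
        = (((Real.sin β^2*(3*(m:ℝ)+3)) * Real.sin β) * (-2) * UU 4 x)
            * (x K * FF m 1 p.1 p.2.1 p.2.2 K x)
          + (((Real.sin β^2*(3*(m:ℝ)+3)) * Real.sin β) * UU 2 x)
            * pd K (FF m 1 p.1 p.2.1 p.2.2 K) x := by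
    intro K
    rw [pd_congr K hx
      (g := fun y => ((Real.sin β^2*(3*(m:ℝ)+3)) * Real.sin β)
        * (UU 2 y * FF m 1 p.1 p.2.1 p.2.2 K y))
      (fun y hy => by rw [gradSq_vT β hm hy, pd_vT_inl β p K hy]; ring)]
    rw [pd_const_mul, pd_mul K (diff_UU hx 2) (diff_FF hx 1 p.1 p.2.1 p.2.2 K), pd_UU hx 2]
    ring
  rw [Finset.sum_congr rfl (fun K _ => hK K), Finset.sum_add_distrib,
    ← Finset.mul_sum, ← Finset.mul_sum]
  rw [sum_x_FF hx 1, sum_pd_FF hx 1]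
  have h3 : WW m (1+2) p.1 p.2.1 p.2.2 x = WW m 3 p.1 p.2.1 p.2.2 x := rfl
  have h5 : WW m 5 p.1 p.2.1 p.2.2 x = UU 2 x * WW m 3 p.1 p.2.1 p.2.2 x :=
    (WW_shift 3 p.1 p.2.1 p.2.2 x).symm
  rw [h3, h5]
  push_cast
  ring

theorem term_K (hm : 2 ≤ m) (hx : x ≠ 0) :
    (∑ b : (Fin m × Fin m × Fin m) ⊕ Unit, (lap (vTilde m β b) x) ^ 2)
      + lap (gradSq (vTilde m β)) x
      + 2 * ∑ K : Fin m, ∑ b : (Fin m × Fin m × Fin m) ⊕ Unit,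
          pd K (vTilde m β b) x * pd K (lap (vTilde m β b)) x
      + 2 * (gradSq (vTilde m β) x) ^ 2
    = ((Real.sin β^2*(3*(m:ℝ)+3))
        * (2*(Real.sin β^2*(3*(m:ℝ)+3)) - (3*(m:ℝ)+3) + 8 - 2*(m:ℝ))) * UU 4 x := by
  have hA : (∑ b : (Fin m × Fin m × Fin m) ⊕ Unit, (lap (vTilde m β b) x) ^ 2)
      = (Real.sin β^2 * ((3*(m:ℝ)+3))^2) * UU 4 x := by
    rw [Fintype.sum_sum_type]
    have h1 : ∀ u : Unit, (lap (vTilde m β (Sum.inr u)) x)^2 = 0 := fun u => by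
      rw [lap_vT_inr]; ring
    have h2 : ∀ p : Fin m × Fin m × Fin m, (lap (vTilde m β (Sum.inl p)) x)^2
        = ((Real.sin β^2 * ((3*(m:ℝ)+3))^2) * UU 4 x) * (WW m 1 p.1 p.2.1 p.2.2 x)^2 := by
      intro p
      rw [lap_vT_inl β p hx]
      have h5 : WW m 3 p.1 p.2.1 p.2.2 x = UU 2 x * WW m 1 p.1 p.2.1 p.2.2 x :=
        (WW_shift 1 p.1 p.2.1 p.2.2 x).symm
      rw [h5, ← UU_sq]
      ring
    rw [Finset.sum_congr rfl (fun p _ => h2 p), Finset.sum_congr rfl (fun u _ => h1 u),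
      ← Finset.mul_sum, normSq_WW hm hx]
    simp
  have hC : (∑ K : Fin m, ∑ b : (Fin m × Fin m × Fin m) ⊕ Unit,
        pd K (vTilde m β b) x * pd K (lap (vTilde m β b)) x)
      = (Real.sin β^2 * (-(3*(m:ℝ))-3) * (3*(m:ℝ)+3)) * UU 4 x := by
    have hl : ∀ (p : Fin m × Fin m × Fin m) (K : Fin m),
        pd K (lap (vTilde m β (Sum.inl p))) x
          = Real.sin β * ((-(3*(m:ℝ))-3) * FF m 3 p.1 p.2.1 p.2.2 K x) := by
      intro p K
      rw [pd_congr K hx (fun y hy => lap_vT_inl β p hy)]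
      rw [pd_const_mul, pd_const_mul, pd_WW hx 3]
    have hK : ∀ K : Fin m, ∑ b : (Fin m × Fin m × Fin m) ⊕ Unit,
        pd K (vTilde m β b) x * pd K (lap (vTilde m β b)) x
        = ∑ p : Fin m × Fin m × Fin m,
            ((Real.sin β^2 * (-(3*(m:ℝ))-3) * UU 2 x) * (FF m 1 p.1 p.2.1 p.2.2 K x)^2
              + ((-2) * Real.sin β^2 * (-(3*(m:ℝ))-3) * WW m 5 p.1 p.2.1 p.2.2 x)
                  * (x K * FF m 1 p.1 p.2.1 p.2.2 K x)) := by
      intro K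
      rw [Fintype.sum_sum_type]
      have h1 : ∀ u : Unit, pd K (vTilde m β (Sum.inr u)) x
          * pd K (lap (vTilde m β (Sum.inr u))) x = 0 := fun u => by
        rw [pd_vT_inr]; ring
      have h2 : ∀ p : Fin m × Fin m × Fin m,
          pd K (vTilde m β (Sum.inl p)) x * pd K (lap (vTilde m β (Sum.inl p))) x
          = (Real.sin β^2 * (-(3*(m:ℝ))-3) * UU 2 x) * (FF m 1 p.1 p.2.1 p.2.2 K x)^2
              + ((-2) * Real.sin β^2 * (-(3*(m:ℝ))-3) * WW m 5 p.1 p.2.1 p.2.2 x)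
                  * (x K * FF m 1 p.1 p.2.1 p.2.2 K x) := by
        intro p
        rw [hl p K, pd_vT_inl β p K hx]
        have hs : FF m 3 p.1 p.2.1 p.2.2 K x
            = UU 2 x * FF m 1 p.1 p.2.1 p.2.2 K x
              - 2 * x K * WW m 5 p.1 p.2.1 p.2.2 x := FF_succ 1 p.1 p.2.1 p.2.2 K x
        rw [hs]
        ring
      rw [Finset.sum_congr rfl (fun p _ => h2 p), Finset.sum_congr rfl (fun u _ => h1 u)]
      simp
    rw [Finset.sum_congr rfl (fun K _ => hK K)]
    simp only [Finset.sum_add_distrib]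
    rw [← Finset.sum_add_distrib]
    have hsplit : ∀ K : Fin m,
        (∑ p : Fin m × Fin m × Fin m,
          (Real.sin β^2 * (-(3*(m:ℝ))-3) * UU 2 x) * (FF m 1 p.1 p.2.1 p.2.2 K x)^2)
        + ∑ p : Fin m × Fin m × Fin m,
            ((-2) * Real.sin β^2 * (-(3*(m:ℝ))-3) * WW m 5 p.1 p.2.1 p.2.2 x)
              * (x K * FF m 1 p.1 p.2.1 p.2.2 K x)
        = (Real.sin β^2 * (-(3*(m:ℝ))-3) * UU 2 x)
            * (∑ p : Fin m × Fin m × Fin m, (FF m 1 p.1 p.2.1 p.2.2 K x)^2)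
          + ∑ p : Fin m × Fin m × Fin m,
              ((-2) * Real.sin β^2 * (-(3*(m:ℝ))-3) * WW m 5 p.1 p.2.1 p.2.2 x)
                * (x K * FF m 1 p.1 p.2.1 p.2.2 K x) := by
      intro K
      rw [← Finset.mul_sum]
    rw [Finset.sum_congr rfl (fun K _ => hsplit K), Finset.sum_add_distrib,
      ← Finset.mul_sum, sum_FF_sq hm hx]
    have hz : ∑ K : Fin m, ∑ p : Fin m × Fin m × Fin m,
        ((-2) * Real.sin β^2 * (-(3*(m:ℝ))-3) * WW m 5 p.1 p.2.1 p.2.2 x)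
          * (x K * FF m 1 p.1 p.2.1 p.2.2 K x) = 0 := by
      rw [Finset.sum_comm]
      refine Finset.sum_eq_zero fun p _ => ?_
      rw [← Finset.mul_sum, sum_x_FF hx 1]
      norm_num
    rw [hz, ← UU_sq]
    ring
  rw [hA, hC, lap_gradSq_vT β hm hx, gradSq_vT β hm hx, ← UU_sq]
  ring

end Part7
theorem stmt16 (m : ℕ) (hm : 2 ≤ m) (β : ℝ) (hβ : β ∈ Set.Ioo 0 (π / 2)) :
    (∀ x : EuclideanSpace ℝ (Fin m), x ≠ 0 → IsBiharmonicAt (vTilde m β) x)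
      ↔ Real.sin β ^ 2 = (5 / 6) * (((m : ℝ) - 1) / ((m : ℝ) + 1)) := by
  obtain ⟨hβ1, hβ2⟩ := hβ
  have hmR : (2:ℝ) ≤ (m:ℝ) := by exact_mod_cast hm
  have hm1 : ((m:ℝ) + 1) ≠ 0 := by linarith
  have hsin : 0 < Real.sin β := Real.sin_pos_of_pos_of_lt_pi hβ1 (by linarith [Real.pi_pos])
  have hcos : 0 < Real.cos β := Real.cos_pos_of_mem_Ioo ⟨by linarith [Real.pi_pos], hβ2⟩
  constructor
  · intro h
    have hlt : 0 < m := by omega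
    set x0 : EE m := EuclideanSpace.single (⟨0, hlt⟩ : Fin m) (1:ℝ) with hx0def
    have hnorm : ‖x0‖ = 1 := by rw [hx0def, EuclideanSpace.norm_single]; norm_num
    have hx0 : x0 ≠ 0 := by
      intro h0
      rw [h0, norm_zero] at hnorm
      norm_num at hnorm
    have heq := h x0 hx0 (Sum.inr ())
    rw [laplap_inr β () x0, term_K β hm hx0,
      Finset.sum_eq_zero (fun K (_ : K ∈ Finset.univ) => div_inr β () K x0)] at heq
    have hU : UU 4 x0 = 1 := by rw [UU, hnorm]; norm_num
    rw [hU] at heq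
    have hw : vTilde m β (Sum.inr ()) x0 = Real.cos β := rfl
    rw [hw] at heq
    have h4 : ((Real.sin β^2*(3*(m:ℝ)+3))
        * (2*(Real.sin β^2*(3*(m:ℝ)+3)) - (3*(m:ℝ)+3) + 8 - 2*(m:ℝ))) * Real.cos β = 0 := by
      linear_combination heq
    have h5 : (Real.sin β^2*(3*(m:ℝ)+3))
        * (2*(Real.sin β^2*(3*(m:ℝ)+3)) - (3*(m:ℝ)+3) + 8 - 2*(m:ℝ)) = 0 := by
      rcases mul_eq_zero.mp h4 with h' | h'
      · exact h'
      · exact absurd h' hcos.ne'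
    have h6 : 2*(Real.sin β^2*(3*(m:ℝ)+3)) - (3*(m:ℝ)+3) + 8 - 2*(m:ℝ) = 0 := by
      rcases mul_eq_zero.mp h5 with h' | h'
      · exfalso
        have : 0 < Real.sin β^2*(3*(m:ℝ)+3) := by positivity
        linarith
      · exact h'
    field_simp
    nlinarith [h6]
  · intro hS x hx
    have hZ : 2*(Real.sin β^2*(3*(m:ℝ)+3)) - (3*(m:ℝ)+3) + 8 - 2*(m:ℝ) = 0 := by
      rw [hS]
      field_simp
      ring
    have hMU : Real.sin β^2*(3*(m:ℝ)+3) = (5*((m:ℝ)-1))/2 := by linarith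
    unfold IsBiharmonicAt
    intro a
    rcases a with p | u
    · rw [laplap_inl β hx p, div_inl β hm hx p, term_K β hm hx]
      have hw : vTilde m β (Sum.inl p) x = Real.sin β * WW m 1 p.1 p.2.1 p.2.2 x := by
        rw [vT_inl β p]
      rw [hw, hZ, hMU]
      ring
    · rw [laplap_inr β u x, term_K β hm hx,
        Finset.sum_eq_zero (fun K (_ : K ∈ Finset.univ) => div_inr β u K x)]
      have hw : vTilde m β (Sum.inr u) x = Real.cos β := rfl
      rw [hw, hZ]
      ring
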